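/- arXiv:1103.1812 — 5 statements merged into one kernel-verified Lean document; each statement's English description precedes it below -/
import Mathlib

section
/- If L is a finite dimensional nilpotent Lie algebra of dimension greater than 1 over a field, then its Schur multiplier M(L) is nonzero. -/
open LieModule Finset

/-- Witt's dimension function `l_n(d) = (1/d) ∑_{m ∣ d} μ(m) n^{d/m}`. -/
noncomputable def lWitt (n d : ℕ) : ℚ :=
  (1 / d) * ∑ m ∈ d.divisors, (ArithmeticFunction.moebius m : ℚ) * (n : ℚ) ^ (d / m)

/-- The quotient `A/B` of two Lie ideals, regarded as a module. -/
abbrev lieIdealQuot (K : Type*) {L : Type*} [Field K] [LieRing L] [LieAlgebra K L]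
    (A B : LieIdeal K L) : Type _ :=
  A.toSubmodule ⧸ (B.toSubmodule.comap A.toSubmodule.subtype)

/-- The Schur multiplier `M(L) = (F² ⊓ R)/[F,R]` computed from a free presentation
`L ≅ F/R`, where `R` is the kernel of the presentation. -/
abbrev schurMult (K : Type*) {F : Type*} [Field K] [LieRing F] [LieAlgebra K F]
    (R : LieIdeal K F) : Type _ :=
  lieIdealQuot K (lowerCentralSeries K F F 1 ⊓ R) ⁅(⊤ : LieIdeal K F), R⁆


section AuxLinear

variable {K : Type*} [Field K] {V : Type*} [AddCommGroup V] [Module K V]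

/-- Factor a functional through a linear map whose kernel it annihilates, over a field. -/
lemma aux_factor_thru {W : Type*} [AddCommGroup W] [Module K W]
    (p : V →ₗ[K] W) (q : V →ₗ[K] K) (h : ∀ v, p v = 0 → q v = 0) :
    ∃ h' : W →ₗ[K] K, ∀ v, h' (p v) = q v := by
  set qbar : (V ⧸ LinearMap.ker p) →ₗ[K] K :=
    Submodule.liftQ (LinearMap.ker p) q (fun v hv => h v hv) with hqbar
  obtain ⟨h', hh'⟩ := LinearMap.exists_extend
    (qbar ∘ₗ (p.quotKerEquivRange).symm.toLinearMap)
  refine ⟨h', fun v => ?_⟩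
  have h1 : h' (p v) = (qbar ∘ₗ (p.quotKerEquivRange).symm.toLinearMap)
      ⟨p v, LinearMap.mem_range_self p v⟩ := by
    rw [← hh']; rfl
  rw [h1]
  have h2 : (p.quotKerEquivRange).symm ⟨p v, LinearMap.mem_range_self p v⟩ =
      Submodule.Quotient.mk v := by
    rw [LinearEquiv.symm_apply_eq]
    exact Subtype.ext (LinearMap.quotKerEquivRange_apply_mk p v).symm
  simp [h2, qbar]
  rfl

/-- A proper subspace has a nonzero annihilating functional normalized at some vector. -/
lemma aux_exists_dual_one (W : Submodule K V) (hW : W ≠ ⊤) :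
    ∃ (φ : Module.Dual K V) (x : V), φ ∈ W.dualAnnihilator ∧ φ x = 1 := by
  obtain ⟨v, hv⟩ : ∃ v, v ∉ W := by
    by_contra hc; push_neg at hc; exact hW (Submodule.eq_top_iff'.2 hc)
  have hv0 : (Submodule.Quotient.mk v : V ⧸ W) ≠ 0 := by
    simpa [Submodule.Quotient.mk_eq_zero] using hv
  obtain ⟨ψ, hψ⟩ : ∃ ψ : Module.Dual K (V ⧸ W), ψ (Submodule.Quotient.mk v) ≠ 0 := by
    by_contra hc; push_neg at hc
    exact hv0 ((Module.forall_dual_apply_eq_zero_iff K _).1 hc)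
  refine ⟨(ψ (Submodule.Quotient.mk v))⁻¹ • (ψ ∘ₗ W.mkQ), v, ?_, ?_⟩
  · rw [Submodule.mem_dualAnnihilator]
    intro w hw
    simp [(Submodule.Quotient.mk_eq_zero W).2 hw]
  · simp [inv_mul_cancel₀ hψ]

/-- Key escape lemma: if `A` is nilpotent and `W` proper, some functional annihilating `W`
is not of the form `k ∘ A` with `k` annihilating `W`. -/
lemma aux_dual_escape (A : V →ₗ[K] V) (hA : ∃ n, A ^ n = 0)
    (W : Submodule K V) (hW : W ≠ ⊤) :
    ∃ φ : Module.Dual K V, φ ∈ W.dualAnnihilator ∧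
      φ ∉ W.dualAnnihilator.map A.dualMap := by
  by_contra hc
  push_neg at hc
  have hle : W.dualAnnihilator ≤ W.dualAnnihilator.map A.dualMap := fun φ hφ => hc φ hφ
  have hpow : ∀ k : ℕ, (A ^ k).dualMap = A.dualMap ^ k := by
    intro k; induction k with
    | zero => ext φ v; rfl
    | succ k ih =>
      rw [pow_succ, Module.End.mul_eq_comp, ← LinearMap.dualMap_comp_dualMap, ih,
        ← Module.End.mul_eq_comp, ← pow_succ']
  have key : ∀ k : ℕ, W.dualAnnihilator ≤ W.dualAnnihilator.map (A.dualMap ^ k) := by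
    intro k; induction k with
    | zero => exact fun φ hφ => ⟨φ, hφ, rfl⟩
    | succ k ih =>
      calc W.dualAnnihilator ≤ W.dualAnnihilator.map (A.dualMap ^ k) := ih
        _ ≤ (W.dualAnnihilator.map A.dualMap).map (A.dualMap ^ k) :=
            Submodule.map_mono hle
        _ = W.dualAnnihilator.map (A.dualMap ^ (k + 1)) := by
            rw [← Submodule.map_comp, ← Module.End.mul_eq_comp, ← pow_succ]
  obtain ⟨n, hn⟩ := hA
  have hz : (0 : V →ₗ[K] V).dualMap = 0 := by ext φ v; simp
  have h0 : W.dualAnnihilator ≤ ⊥ := by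
    have := key n
    rwa [← hpow, hn, hz, Submodule.map_zero] at this
  obtain ⟨φ, x, hφ, hφx⟩ := aux_exists_dual_one W hW
  have hφ0 : φ = 0 := by simpa using h0 hφ
  rw [hφ0] at hφx; simpa using hφx

end AuxLinear

section Cocycle

/-- Data of a `2`-cocycle of wedge form on a Lie algebra. -/
structure CocycleData (K L : Type*) [Field K] [LieRing L] [LieAlgebra K L] where
  f : Module.Dual K L
  g : Module.Dual K L
  hf : ∀ a b : L, f ⁅a, b⁆ = 0
  hJ : ∀ a b c : L, f a * g ⁅b, c⁆ - f b * g ⁅a, c⁆ + f c * g ⁅a, b⁆ = 0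

variable {K L : Type*} [Field K] [LieRing L] [LieAlgebra K L]

/-- The one-dimensional central extension determined by a cocycle. -/
def CocycleData.Ext (_ : CocycleData K L) : Type _ := L × K

namespace CocycleData

variable (c : CocycleData K L)

instance : AddCommGroup c.Ext := inferInstanceAs (AddCommGroup (L × K))
instance : Module K c.Ext := inferInstanceAs (Module K (L × K))

@[simp] lemma ext_add_fst (p q : c.Ext) : (p + q).1 = p.1 + q.1 := rfl
@[simp] lemma ext_add_snd (p q : c.Ext) : (p + q).2 = p.2 + q.2 := rfl
@[simp] lemma ext_smul_fst (t : K) (p : c.Ext) : (t • p).1 = t • p.1 := rfl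
@[simp] lemma ext_smul_snd (t : K) (p : c.Ext) : (t • p).2 = t * p.2 := rfl
@[simp] lemma ext_zero_fst : (0 : c.Ext).1 = 0 := rfl
@[simp] lemma ext_zero_snd : (0 : c.Ext).2 = 0 := rfl

/-- The twisted bracket. -/
def brkt (p q : L × K) : L × K := (⁅p.1, q.1⁆, c.f p.1 * c.g q.1 - c.f q.1 * c.g p.1)

@[simp] lemma brkt_fst' (p q : L × K) : (c.brkt p q).1 = ⁅p.1, q.1⁆ := rfl
@[simp] lemma brkt_snd' (p q : L × K) :
    (c.brkt p q).2 = c.f p.1 * c.g q.1 - c.f q.1 * c.g p.1 := rfl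

instance : LieRing c.Ext where
  bracket p q := c.brkt p q
  add_lie p q r := by
    refine Prod.ext ?_ ?_
    · show (c.brkt (p + q) r).1 = (c.brkt p r + c.brkt q r).1
      simp [brkt, add_lie]
    · show (c.brkt (p + q) r).2 = (c.brkt p r + c.brkt q r).2
      simp [brkt]; ring
  lie_add p q r := by
    refine Prod.ext ?_ ?_
    · show (c.brkt p (q + r)).1 = (c.brkt p q + c.brkt p r).1
      simp [brkt, lie_add]
    · show (c.brkt p (q + r)).2 = (c.brkt p q + c.brkt p r).2
      simp [brkt]; ring
  lie_self p := by
    refine Prod.ext ?_ ?_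
    · show (c.brkt p p).1 = (0 : c.Ext).1
      simp [brkt]
    · show (c.brkt p p).2 = (0 : c.Ext).2
      simp [brkt]
  leibniz_lie p q r := by
    refine Prod.ext ?_ ?_
    · show (c.brkt p (c.brkt q r)).1 = (c.brkt (c.brkt p q) r + c.brkt q (c.brkt p r)).1
      simp only [brkt, ext_add_fst]
      exact leibniz_lie _ _ _
    · show (c.brkt p (c.brkt q r)).2 = (c.brkt (c.brkt p q) r + c.brkt q (c.brkt p r)).2
      simp only [brkt, ext_add_snd, Prod.snd_add, Prod.fst_add, c.hf]
      linear_combination c.hJ p.1 q.1 r.1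

instance : LieAlgebra K c.Ext where
  lie_smul t p q := by
    refine Prod.ext ?_ ?_
    · show (c.brkt p (t • q)).1 = (t • c.brkt p q).1
      simp [brkt]
    · show (c.brkt p (t • q)).2 = (t • c.brkt p q).2
      simp [brkt]; ring

@[simp] lemma brkt_fst (p q : c.Ext) : (⁅p, q⁆ : c.Ext).1 = ⁅p.1, q.1⁆ := rfl

@[simp] lemma brkt_snd (p q : c.Ext) :
    (⁅p, q⁆ : c.Ext).2 = c.f p.1 * c.g q.1 - c.f q.1 * c.g p.1 := rfl

/-- First projection as a morphism of Lie algebras. -/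
def pr1 : c.Ext →ₗ⁅K⁆ L where
  toFun p := p.1
  map_add' p q := rfl
  map_smul' t p := rfl
  map_lie' := rfl

@[simp] lemma pr1_apply (p : c.Ext) : c.pr1 p = p.1 := rfl

/-- Second projection as a linear map. -/
def pr2 : c.Ext →ₗ[K] K where
  toFun p := p.2
  map_add' p q := rfl
  map_smul' t p := rfl

@[simp] lemma pr2_apply (p : c.Ext) : c.pr2 p = p.2 := rfl

end CocycleData

end Cocycle

section Main

open LieModule

variable {K L : Type*} [Field K] [LieRing L] [LieAlgebra K L]

lemma bracket_mem_derived (a b : L) : ⁅a, b⁆ ∈ lowerCentralSeries K L L 1 := by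
  rw [LieModule.lowerCentralSeries_succ, LieModule.lowerCentralSeries_zero]
  exact LieSubmodule.lie_mem_lie (LieSubmodule.mem_top _) (LieSubmodule.mem_top _)

/-- The key existence result: a wedge-type cocycle which is not a coboundary. -/
lemma exists_good [FiniteDimensional K L] [LieRing.IsNilpotent L]
    (hdim : 1 < Module.finrank K L) :
    ∃ (f g : Module.Dual K L) (x : L), f x = 1 ∧ (∀ a b : L, f ⁅a, b⁆ = 0) ∧
      (∀ a b : L, f a = 0 → f b = 0 → g ⁅a, b⁆ = 0) ∧
      ¬ ∃ h : Module.Dual K L, ∀ a b : L, f a * g b - f b * g a = h ⁅a, b⁆ := by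
  have hnt : Nontrivial L := Module.nontrivial_of_finrank_pos (R := K) (by omega)
  obtain ⟨nL, hnL⟩ := LieModule.IsNilpotent.nilpotent
    (R := K) (L := L) (M := L)
  -- the derived algebra is proper
  have hD : (lowerCentralSeries K L L 1).toSubmodule ≠ ⊤ := by
    intro htop
    have h1 : lowerCentralSeries K L L 1 = ⊤ := by
      rwa [LieSubmodule.toSubmodule_eq_top] at htop
    have hall : ∀ k, lowerCentralSeries K L L k = ⊤ := by
      intro k; induction k with
      | zero => exact LieModule.lowerCentralSeries_zero K L L
      | succ k ih =>
        rw [LieModule.lowerCentralSeries_succ, LieModule.lowerCentralSeries_zero] at h1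
        rw [LieModule.lowerCentralSeries_succ, ih]
        exact h1
    obtain ⟨y, z, hyz⟩ := hnt
    have : y ∈ lowerCentralSeries K L L nL := (hall nL) ▸ LieSubmodule.mem_top _
    have hz : z ∈ lowerCentralSeries K L L nL := (hall nL) ▸ LieSubmodule.mem_top _
    rw [hnL, LieSubmodule.mem_bot] at this hz
    exact hyz (this.trans hz.symm)
  obtain ⟨f, x, hfD, hfx⟩ := aux_exists_dual_one _ hD
  have hf : ∀ a b : L, f ⁅a, b⁆ = 0 := fun a b =>
    (Submodule.mem_dualAnnihilator f).1 hfD _ (bracket_mem_derived a b)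
  set Msub : Submodule K L := LinearMap.ker f with hMsub
  -- the restriction of `ad x` to `Msub`
  have hmapM : ∀ m ∈ Msub, (LieAlgebra.ad K L x : Module.End K L) m ∈ Msub := by
    intro m _; simp only [LieAlgebra.ad_apply, hMsub, LinearMap.mem_ker]; exact hf x m
  set A : Msub →ₗ[K] Msub := (LieAlgebra.ad K L x : Module.End K L).restrict hmapM with hA
  have hAnil : ∃ n, A ^ n = 0 := by
    obtain ⟨n, hn⟩ := LieModule.isNilpotent_toEnd_of_isNilpotent K L L x
    refine ⟨n, ?_⟩
    rw [hA, Module.End.pow_restrict]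
    ext m
    have : ((LieAlgebra.ad K L x : Module.End K L) ^ n) m.1 = 0 := by
      change ((LieModule.toEnd K L L x) ^ n) m.1 = 0
      rw [hn]; rfl
    simp [LinearMap.restrict_apply, this]
  -- the span of brackets inside Msub
  set S : Set Msub := {w : Msub | ∃ a b : Msub, (w : L) = ⁅(a : L), (b : L)⁆} with hS
  set W : Submodule K Msub := Submodule.span K S with hW
  have hMne : ∃ y : L, y ∈ Msub ∧ y ≠ 0 := by
    by_contra hc
    push_neg at hc
    have hker : LinearMap.ker f = ⊥ := by
      rw [Submodule.eq_bot_iff]; exact fun y hy => hc y hy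
    have hinj : Function.Injective f := LinearMap.ker_eq_bot.1 hker
    have := LinearMap.finrank_le_finrank_of_injective hinj
    rw [Module.finrank_self] at this
    omega
  have hWtop : W ≠ ⊤ := by
    intro htop
    have key : ∀ k, Msub ≤ (lowerCentralSeries K L L k).toSubmodule := by
      intro k; induction k with
      | zero => exact le_top
      | succ k ih =>
        intro m hm
        have hmW : (⟨m, hm⟩ : Msub) ∈ W := htop ▸ Submodule.mem_top
        have hle : W ≤ (lowerCentralSeries K L L (k+1)).toSubmodule.comap Msub.subtype := by
          rw [hW, Submodule.span_le]
          rintro w ⟨a, b, hab⟩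
          simp only [SetLike.mem_coe, Submodule.mem_comap, Submodule.coe_subtype]
          rw [hab, LieModule.lowerCentralSeries_succ]
          exact LieSubmodule.lie_mem_lie (LieSubmodule.mem_top _) (ih b.2)
        exact hle hmW
    obtain ⟨y, hy, hy0⟩ := hMne
    have := key nL hy
    rw [hnL] at this
    exact hy0 (by simpa using this)
  obtain ⟨φ, hφann, hφnot⟩ := aux_dual_escape A hAnil W hWtop
  obtain ⟨g, hg⟩ := LinearMap.exists_extend (V := L) (V' := K) φ
  have hgφ : ∀ m : Msub, g m.1 = φ m := fun m => by rw [← hg]; rfl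
  have hg0 : ∀ a b : L, f a = 0 → f b = 0 → g ⁅a, b⁆ = 0 := by
    intro a b ha hb
    have hab : ⁅a, b⁆ ∈ Msub := by simp only [hMsub, LinearMap.mem_ker]; exact hf a b
    have : g ⁅a, b⁆ = φ ⟨⁅a, b⁆, hab⟩ := hgφ ⟨⁅a, b⁆, hab⟩
    rw [this]
    exact (Submodule.mem_dualAnnihilator φ).1 hφann _
      (Submodule.subset_span ⟨⟨a, ha⟩, ⟨b, hb⟩, rfl⟩)
  refine ⟨f, g, x, hfx, hf, hg0, ?_⟩
  rintro ⟨h, hh⟩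
  set k₀ : Module.Dual K Msub := h ∘ₗ Msub.subtype with hk₀
  have hk₀ann : k₀ ∈ W.dualAnnihilator := by
    rw [Submodule.mem_dualAnnihilator]
    intro w hw
    have hle : W ≤ LinearMap.ker k₀ := by
      rw [hW, Submodule.span_le]
      rintro w' ⟨a, b, hab⟩
      simp only [SetLike.mem_coe, LinearMap.mem_ker, hk₀, LinearMap.coe_comp,
        Function.comp_apply, Submodule.coe_subtype]
      rw [hab, ← hh]
      have ha : f (a : L) = 0 := a.2
      have hb : f (b : L) = 0 := b.2
      rw [ha, hb]; ring
    exact hle hw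
  have hmap : A.dualMap k₀ = φ := by
    ext m
    have h1 : (A m : L) = ⁅x, (m : L)⁆ := by
      simp [hA, LinearMap.restrict_apply, LieAlgebra.ad_apply]
    have h2 : A.dualMap k₀ m = h ⁅x, (m : L)⁆ := by
      simp only [LinearMap.dualMap_apply, hk₀, LinearMap.coe_comp, Function.comp_apply,
        Submodule.coe_subtype, h1]
    rw [h2, ← hh]
    have hm : f (m : L) = 0 := m.2
    rw [hfx, hm, ← hgφ m]
    ring
  exact hφnot ⟨k₀, hk₀ann, hmap⟩

end Main

section Identities

variable {K L : Type*} [Field K] [LieRing L] [LieAlgebra K L]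

lemma hK_identity (f g : Module.Dual K L) (x : L) (hfx : f x = 1)
    (hg0 : ∀ a b : L, f a = 0 → f b = 0 → g ⁅a, b⁆ = 0) :
    ∀ b c : L, g ⁅b, c⁆ = f b * g ⁅x, c⁆ - f c * g ⁅x, b⁆ := by
  intro b c
  have hb : f (b - f b • x) = 0 := by simp [hfx]
  have hc : f (c - f c • x) = 0 := by simp [hfx]
  have e1 : ⁅b - f b • x, c - f c • x⁆ = ⁅b, c⁆ - f b • ⁅x, c⁆ + f c • ⁅x, b⁆ := by
    rw [lie_sub, sub_lie, sub_lie, lie_smul, lie_smul, smul_lie, smul_lie, lie_self, smul_zero,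
      smul_zero, (lie_skew b x).symm, smul_neg]
    abel
  have e2 : ⁅b, c⁆ = ⁅b - f b • x, c - f c • x⁆ + f b • ⁅x, c⁆ - f c • ⁅x, b⁆ := by
    rw [e1]; abel
  rw [e2, map_sub, map_add, map_smul, map_smul, hg0 _ _ hb hc, smul_eq_mul, smul_eq_mul]
  ring

lemma hJ_identity (f g : Module.Dual K L) (x : L) (hfx : f x = 1)
    (hg0 : ∀ a b : L, f a = 0 → f b = 0 → g ⁅a, b⁆ = 0) :
    ∀ a b c : L, f a * g ⁅b, c⁆ - f b * g ⁅a, c⁆ + f c * g ⁅a, b⁆ = 0 := by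
  intro a b c
  rw [hK_identity f g x hfx hg0 b c, hK_identity f g x hfx hg0 a c,
    hK_identity f g x hfx hg0 a b]
  ring

end Identities

open LieModule

theorem stmt4' (K : Type) [Field K] (L : Type) [LieRing L] [LieAlgebra K L]
    [FiniteDimensional K L] [LieRing.IsNilpotent L]
    (hdim : 1 < Module.finrank K L)
    (X : Type) (π : FreeLieAlgebra K X →ₗ⁅K⁆ L) (hπ : Function.Surjective π) :
    Nontrivial ((lowerCentralSeries K (FreeLieAlgebra K X) (FreeLieAlgebra K X) 1 ⊓
        π.ker).toSubmodule ⧸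
      ((⁅(⊤ : LieIdeal K (FreeLieAlgebra K X)), π.ker⁆ : LieIdeal K
        (FreeLieAlgebra K X)).toSubmodule.comap
        (lowerCentralSeries K (FreeLieAlgebra K X) (FreeLieAlgebra K X) 1 ⊓
          π.ker).toSubmodule.subtype)) := by
  obtain ⟨f, g, x, hfx, hf, hg0, hnc⟩ := exists_good (K := K) (L := L) hdim
  set c : CocycleData K L := ⟨f, g, hf, hJ_identity f g x hfx hg0⟩ with hcdef
  set σ : FreeLieAlgebra K X →ₗ⁅K⁆ c.Ext :=
    FreeLieAlgebra.lift K (fun y => ((π (FreeLieAlgebra.of K y), 0) : L × K)) with hσdef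
  have hσ1 : ∀ u, (σ u).1 = π u := by
    have heq : c.pr1.comp σ = π := by
      apply FreeLieAlgebra.hom_ext
      intro y
      simp only [LieHom.comp_apply, hσdef, FreeLieAlgebra.lift_of_apply]
      erw [FreeLieAlgebra.lift_of_apply]
      rfl
    intro u
    exact DFunLike.congr_fun heq u
  -- σ kills ⁅⊤, R⁆
  have hle : (⁅(⊤ : LieIdeal K (FreeLieAlgebra K X)), π.ker⁆ :
      LieIdeal K (FreeLieAlgebra K X)) ≤ σ.ker := by
    rw [LieSubmodule.lieIdeal_oper_eq_span]
    apply (LieSubmodule.lieSpan_le).2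
    rintro w ⟨u, r, rfl⟩
    simp only [SetLike.mem_coe, LieHom.mem_ker]
    rw [LieHom.map_lie]
    have hr : (σ (r : FreeLieAlgebra K X)).1 = 0 := by
      rw [hσ1]; exact (LieHom.mem_ker).1 r.2
    refine Prod.ext ?_ ?_
    · show ⁅(σ (u : FreeLieAlgebra K X)).1, (σ (r : FreeLieAlgebra K X)).1⁆ = (0 : c.Ext).1
      rw [hr, lie_zero]; rfl
    · show (⁅σ (u : FreeLieAlgebra K X), σ (r : FreeLieAlgebra K X)⁆ : c.Ext).2 = (0 : c.Ext).2
      rw [c.brkt_snd, hr]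
      simp
  have hkill : ∀ w, w ∈ (⁅(⊤ : LieIdeal K (FreeLieAlgebra K X)), π.ker⁆ :
      LieIdeal K (FreeLieAlgebra K X)) → σ w = 0 :=
    fun w hw => (LieHom.mem_ker).1 (hle hw)
  by_contra hcon
  rw [not_nontrivial_iff_subsingleton] at hcon
  -- every element of F² ∩ R lies in ⁅⊤, R⁆, hence is killed by σ
  have hvan : ∀ w : FreeLieAlgebra K X,
      w ∈ lowerCentralSeries K (FreeLieAlgebra K X) (FreeLieAlgebra K X) 1 →
      w ∈ π.ker → σ w = 0 := by
    intro w hw1 hw2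
    have hmem : w ∈ (lowerCentralSeries K (FreeLieAlgebra K X) (FreeLieAlgebra K X) 1 ⊓
        π.ker : LieIdeal K (FreeLieAlgebra K X)) := (LieSubmodule.mem_inf _ _ _).2 ⟨hw1, hw2⟩
    have h0 := hcon.elim (Submodule.Quotient.mk ⟨w, hmem⟩) 0
    rw [Submodule.Quotient.mk_eq_zero] at h0
    rw [Submodule.mem_comap] at h0
    exact hkill w h0
  -- factor the second component of σ through π
  obtain ⟨hL, hhL⟩ := aux_factor_thru
    (π.toLinearMap ∘ₗ (Submodule.subtype _))
    ((c.pr2 ∘ₗ σ.toLinearMap) ∘ₗ (Submodule.subtype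
      ((lowerCentralSeries K (FreeLieAlgebra K X) (FreeLieAlgebra K X) 1 :
        LieIdeal K (FreeLieAlgebra K X)).toSubmodule)))
    (by
      rintro ⟨v, hv⟩ hpv
      simp only [LinearMap.coe_comp, Function.comp_apply, Submodule.coe_subtype,
        LieHom.coe_toLinearMap] at hpv ⊢
      have hv2 : v ∈ π.ker := (LieHom.mem_ker).2 hpv
      rw [hvan v hv hv2]
      simp)
  apply hnc
  refine ⟨hL, ?_⟩
  intro a b
  obtain ⟨u, rfl⟩ := hπ a
  obtain ⟨v, rfl⟩ := hπ b
  have hbr : ⁅u, v⁆ ∈ lowerCentralSeries K (FreeLieAlgebra K X) (FreeLieAlgebra K X) 1 :=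
    bracket_mem_derived u v
  have h1 : hL ⁅π u, π v⁆ = hL (π ⁅u, v⁆) := by rw [LieHom.map_lie]
  have h2 := hhL ⟨⁅u, v⁆, hbr⟩
  simp only [LinearMap.coe_comp, Function.comp_apply, Submodule.coe_subtype,
    LieHom.coe_toLinearMap] at h2
  rw [h1, h2, LieHom.map_lie]
  have h3 : (⁅σ u, σ v⁆ : c.Ext).2 =
      c.f (σ u).1 * c.g (σ v).1 - c.f (σ v).1 * c.g (σ u).1 := c.brkt_snd _ _
  show f (π u) * g (π v) - f (π v) * g (π u) = c.pr2 ⁅σ u, σ v⁆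
  rw [c.pr2_apply, h3, hσ1 u, hσ1 v]

theorem stmt4 (K : Type) [Field K] (L : Type) [LieRing L] [LieAlgebra K L]
    [FiniteDimensional K L] [LieRing.IsNilpotent L]
    (hdim : 1 < Module.finrank K L)
    (X : Type) (π : FreeLieAlgebra K X →ₗ⁅K⁆ L) (hπ : Function.Surjective π) :
    Nontrivial (schurMult K π.ker) :=
  stmt4' K L hdim X π hπ
end

section
/- If L is a finite dimensional Lie algebra of dimension n over a field, then dim M(L) ≤ n(n-1)/2 - dim L^2, where L^2 = [L,L]. -/
open LieModule Finset

/-- The bracket of `F`, cod-restricted to a submodule `A` containing all brackets and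
composed with the quotient map onto `A ⧸ p`. -/
noncomputable def brmap {K F : Type} [Field K] [LieRing F] [LieAlgebra K F]
    (A : Submodule K F) (hbr : ∀ x y : F, ⁅x, y⁆ ∈ A) (p : Submodule K A) :
    F →ₗ[K] F →ₗ[K] (A ⧸ p) where
  toFun x :=
    { toFun := fun y => p.mkQ ⟨⁅x, y⁆, hbr x y⟩
      map_add' := fun y z => by
        show p.mkQ ⟨⁅x, y + z⁆, hbr x (y + z)⟩ = p.mkQ ⟨⁅x, y⁆, hbr x y⟩ + p.mkQ ⟨⁅x, z⁆, hbr x z⟩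
        have h : (⟨⁅x, y + z⁆, hbr x (y + z)⟩ : A) = ⟨⁅x, y⁆, hbr x y⟩ + ⟨⁅x, z⁆, hbr x z⟩ :=
          Subtype.ext (lie_add x y z)
        rw [h, map_add]
      map_smul' := fun c y => by
        show p.mkQ ⟨⁅x, c • y⁆, hbr x (c • y)⟩ = (RingHom.id K) c • p.mkQ ⟨⁅x, y⁆, hbr x y⟩
        have h : (⟨⁅x, c • y⁆, hbr x (c • y)⟩ : A) = c • (⟨⁅x, y⁆, hbr x y⟩ : A) :=
          Subtype.ext (lie_smul c x y)
        rw [RingHom.id_apply, h, map_smul] }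
  map_add' x z := by
    ext y
    simp only [LinearMap.add_apply, LinearMap.coe_mk, AddHom.coe_mk]
    show p.mkQ ⟨⁅x + z, y⁆, hbr (x + z) y⟩ = p.mkQ ⟨⁅x, y⁆, hbr x y⟩ + p.mkQ ⟨⁅z, y⁆, hbr z y⟩
    have h : (⟨⁅x + z, y⁆, hbr (x + z) y⟩ : A) = ⟨⁅x, y⁆, hbr x y⟩ + ⟨⁅z, y⁆, hbr z y⟩ :=
      Subtype.ext (add_lie x z y)
    rw [h, map_add]
  map_smul' c x := by
    ext y
    simp only [LinearMap.smul_apply, LinearMap.coe_mk, AddHom.coe_mk, RingHom.id_apply]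
    show p.mkQ ⟨⁅c • x, y⁆, hbr (c • x) y⟩ = c • p.mkQ ⟨⁅x, y⁆, hbr x y⟩
    have h : (⟨⁅c • x, y⁆, hbr (c • x) y⟩ : A) = c • (⟨⁅x, y⁆, hbr x y⟩ : A) :=
      Subtype.ext (smul_lie c x y)
    rw [h, map_smul]

@[simp] lemma brmap_apply {K F : Type} [Field K] [LieRing F] [LieAlgebra K F]
    (A : Submodule K F) (hbr : ∀ x y : F, ⁅x, y⁆ ∈ A) (p : Submodule K A) (x y : F) :
    brmap A hbr p x y = p.mkQ ⟨⁅x, y⁆, hbr x y⟩ := rfl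

set_option maxHeartbeats 2000000 in
/-- The key bound, for an arbitrary presentation of `L` by an arbitrary Lie algebra `F`. -/
theorem schurMult_aux (K : Type) [Field K] (L : Type) [LieRing L] [LieAlgebra K L]
    [FiniteDimensional K L] (n : ℕ) (hn : Module.finrank K L = n)
    (F : Type) [LieRing F] [LieAlgebra K F] (π : F →ₗ⁅K⁆ L) (hπ : Function.Surjective π) :
    (Module.finrank K (schurMult K π.ker) : ℚ) ≤
      (n : ℚ) * ((n : ℚ) - 1) / 2 -
        (Module.finrank K (lowerCentralSeries K L L 1).toSubmodule : ℚ) := by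
  classical
  set R : LieIdeal K F := π.ker with hR
  set A : Submodule K F := (lowerCentralSeries K F F 1).toSubmodule with hA
  set B : Submodule K F :=
    LieSubmodule.toSubmodule (⁅(⊤ : LieIdeal K F), R⁆ : LieIdeal K F) with hB
  set C : Submodule K F :=
    LieSubmodule.toSubmodule (lowerCentralSeries K F F 1 ⊓ R : LieIdeal K F) with hC
  have hA1 : lowerCentralSeries K F F 1 = ⁅(⊤ : LieIdeal K F), (⊤ : LieSubmodule K F F)⁆ := by
    rw [lowerCentralSeries_succ, lowerCentralSeries_zero]
  have hbr : ∀ x y : F, ⁅x, y⁆ ∈ A := by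
    intro x y
    rw [hA, hA1]
    exact LieSubmodule.lie_mem_lie (LieSubmodule.mem_top x) (LieSubmodule.mem_top y)
  have hBR : B ≤ R.toSubmodule := by
    rw [hB]
    exact (LieSubmodule.toSubmodule_le_toSubmodule _ _).mpr (LieSubmodule.lie_le_right R ⊤)
  have hBA : B ≤ A := by
    rw [hB, hA, hA1]
    exact (LieSubmodule.toSubmodule_le_toSubmodule _ _).mpr
      (LieSubmodule.mono_lie (le_refl _) le_top)
  have hCA : C ≤ A := by
    rw [hC, hA, LieSubmodule.inf_toSubmodule]
    exact inf_le_left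
  have hCR : C ≤ R.toSubmodule := by
    rw [hC, LieSubmodule.inf_toSubmodule]
    exact inf_le_right
  -- a linear section of π
  obtain ⟨sec, hsec⟩ := (π.toLinearMap).exists_rightInverse_of_surjective
    (LinearMap.range_eq_top.2 (by simpa using hπ))
  have hs : ∀ u : L, π (sec u) = u := by
    intro u
    have := LinearMap.ext_iff.mp hsec u
    simpa using this
  -- the two quotient modules
  set p : Submodule K A := B.comap A.subtype with hp
  set pC : Submodule K C := B.comap C.subtype with hpC
  let β := brmap A hbr p
  -- basis of L
  obtain ⟨e⟩ : Nonempty (Module.Basis (Fin n) K L) := ⟨Module.finBasisOfFinrankEq K L hn⟩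
  letI : DecidableEq (A ⧸ p) := Classical.decEq _
  set s : Finset (Fin n × Fin n) := univ.filter (fun q => q.1 < q.2) with hsdef
  set t : Finset (A ⧸ p) := s.image (fun q => β (sec (e q.1)) (sec (e q.2))) with htdef
  set W : Submodule K (A ⧸ p) := Submodule.span K (t : Set (A ⧸ p)) with hW
  have hβW : ∀ i j : Fin n, β (sec (e i)) (sec (e j)) ∈ W := by
    intro i j
    rcases lt_trichotomy i j with h | h | h
    · exact Submodule.subset_span (Finset.mem_coe.mpr (Finset.mem_image_of_mem _
        (show (i, j) ∈ s from Finset.mem_filter.mpr ⟨Finset.mem_univ _, h⟩)))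
    · subst h
      have : β (sec (e i)) (sec (e i)) = 0 := by
        show p.mkQ ⟨⁅sec (e i), sec (e i)⁆, _⟩ = 0
        rw [show (⟨⁅sec (e i), sec (e i)⁆, hbr _ _⟩ : A) = 0 from Subtype.ext (lie_self _),
          map_zero]
      rw [this]; exact zero_mem W
    · have hneg : β (sec (e i)) (sec (e j)) = -(β (sec (e j)) (sec (e i))) := by
        show p.mkQ ⟨⁅sec (e i), sec (e j)⁆, _⟩ = -(p.mkQ ⟨⁅sec (e j), sec (e i)⁆, _⟩)
        rw [← map_neg]; congr 1
        refine Subtype.ext ?_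
        show ⁅sec (e i), sec (e j)⁆ = -⁅sec (e j), sec (e i)⁆
        rw [lie_skew]
      rw [hneg]
      exact neg_mem (Submodule.subset_span (Finset.mem_coe.mpr (Finset.mem_image_of_mem _
        (show (j, i) ∈ s from Finset.mem_filter.mpr ⟨Finset.mem_univ _, h⟩))))
  have key2 : ∀ u w : L, β (sec u) (sec w) ∈ W := by
    intro u w
    have hu : sec u = ∑ i, e.repr u i • sec (e i) := by
      conv_lhs => rw [← e.sum_repr u]
      rw [map_sum]; simp_rw [map_smul]
    have hw : sec w = ∑ j, e.repr w j • sec (e j) := by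
      conv_lhs => rw [← e.sum_repr w]
      rw [map_sum]; simp_rw [map_smul]
    rw [hu, hw, map_sum]
    refine Submodule.sum_mem _ fun j _ => ?_
    rw [map_smul]
    refine Submodule.smul_mem _ _ ?_
    rw [map_sum, LinearMap.coe_sum, Finset.sum_apply]
    refine Submodule.sum_mem _ fun i _ => ?_
    rw [map_smul, LinearMap.smul_apply]
    exact Submodule.smul_mem _ _ (hβW i j)
  -- every element of A ⧸ p lies in W
  have hAspan : A = Submodule.span K
      {m : F | ∃ x ∈ (⊤ : LieIdeal K F), ∃ y ∈ (⊤ : LieSubmodule K F F), ⁅x, y⁆ = m} := by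
    rw [hA, hA1]
    exact LieSubmodule.lieIdeal_oper_eq_linear_span' _ _
  have key3 : ∀ (a : F) (ha : a ∈ A), p.mkQ ⟨a, ha⟩ ∈ W := by
    intro a ha
    have ha' : a ∈ Submodule.span K
        {m : F | ∃ x ∈ (⊤ : LieIdeal K F), ∃ y ∈ (⊤ : LieSubmodule K F F), ⁅x, y⁆ = m} := by
      rw [← hAspan]; exact ha
    refine Submodule.span_induction
      (p := fun m _ => ∀ hm : m ∈ A, p.mkQ ⟨m, hm⟩ ∈ W) ?_ ?_ ?_ ?_ ha' ha
    · rintro m ⟨x, -, y, -, rfl⟩ hm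
      -- decompose the bracket
      have hrx : x - sec (π x) ∈ R := by
        rw [hR, LieHom.mem_ker, map_sub, hs, sub_self]
      have hry : y - sec (π y) ∈ R := by
        rw [hR, LieHom.mem_ker, map_sub, hs, sub_self]
      have hb1 : ⁅sec (π x), y - sec (π y)⁆ ∈ B :=
        LieSubmodule.lie_mem_lie (LieSubmodule.mem_top _) hry
      have hb2 : ⁅x - sec (π x), y⁆ ∈ B := by
        have h' : ⁅x - sec (π x), y⁆ = -⁅y, x - sec (π x)⁆ := by rw [lie_skew]
        rw [h']
        exact neg_mem (LieSubmodule.lie_mem_lie (LieSubmodule.mem_top _) hrx)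
      have hbb : ⁅sec (π x), y - sec (π y)⁆ + ⁅x - sec (π x), y⁆ ∈ A :=
        hBA (add_mem hb1 hb2)
      have hdecomp : ⁅x, y⁆ =
          ⁅sec (π x), sec (π y)⁆ + (⁅sec (π x), y - sec (π y)⁆ + ⁅x - sec (π x), y⁆) := by
        simp only [lie_sub, sub_lie]
        abel
      have hsplit : p.mkQ ⟨⁅x, y⁆, hm⟩ =
          β (sec (π x)) (sec (π y)) +
            p.mkQ ⟨⁅sec (π x), y - sec (π y)⁆ + ⁅x - sec (π x), y⁆, hbb⟩ := by
        show p.mkQ _ = p.mkQ _ + p.mkQ _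
        rw [← map_add]; congr 1; exact Subtype.ext hdecomp
      have hz : p.mkQ ⟨⁅sec (π x), y - sec (π y)⁆ + ⁅x - sec (π x), y⁆, hbb⟩ = 0 := by
        rw [Submodule.mkQ_apply, Submodule.Quotient.mk_eq_zero]
        exact Submodule.mem_comap.mpr (add_mem hb1 hb2)
      rw [hsplit, hz, add_zero]
      exact key2 (π x) (π y)
    · intro hm
      rw [show (⟨0, hm⟩ : A) = 0 from rfl, map_zero]
      exact zero_mem W
    · intro a b hma hmb iha ihb hm
      have haA : a ∈ A := by rw [hAspan]; exact hma
      have hbA : b ∈ A := by rw [hAspan]; exact hmb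
      have : p.mkQ ⟨a + b, hm⟩ = p.mkQ ⟨a, haA⟩ + p.mkQ ⟨b, hbA⟩ := by
        rw [← map_add]; rfl
      rw [this]
      exact add_mem (iha haA) (ihb hbA)
    · intro c a hma iha hm
      have haA : a ∈ A := by rw [hAspan]; exact hma
      have : p.mkQ ⟨c • a, hm⟩ = c • p.mkQ ⟨a, haA⟩ := by
        rw [← map_smul]; rfl
      rw [this]
      exact Submodule.smul_mem _ _ (iha haA)
  have hspan : Submodule.span K (t : Set (A ⧸ p)) = ⊤ := by
    rw [eq_top_iff]
    rintro z -
    obtain ⟨⟨a, ha⟩, rfl⟩ := Submodule.Quotient.mk_surjective p z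
    exact key3 a ha
  haveI hfinQ : Module.Finite K (A ⧸ p) :=
    Module.finite_def.mpr ⟨t, hspan⟩
  -- cardinality bound
  have hcard : s.card ≤ n.choose 2 := by
    have h1 : Fintype.card { z : Sym2 (Fin n) // ¬z.IsDiag } = n.choose 2 := by
      rw [Sym2.card_subtype_not_diag, Fintype.card_fin]
    rw [← h1, Fintype.card_subtype]
    refine Finset.card_le_card_of_injOn (fun q => Sym2.mk q.1 q.2) ?_ ?_
    · intro q hq
      rw [hsdef, Finset.mem_coe, Finset.mem_filter] at hq
      rw [Finset.mem_coe, Finset.mem_filter]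
      refine ⟨Finset.mem_univ _, ?_⟩
      rw [Sym2.isDiag_iff_proj_eq]
      exact fun h => absurd h (ne_of_lt hq.2)
    · intro q hq q' hq' hqq
      rw [hsdef, Finset.coe_filter] at hq hq'
      obtain ⟨-, hlt⟩ := hq
      obtain ⟨-, hlt'⟩ := hq'
      have := Sym2.eq_iff.mp (by exact hqq)
      rcases this with ⟨h1, h2⟩ | ⟨h1, h2⟩
      · exact Prod.ext h1 h2
      · exfalso
        rw [← h1] at hlt'
        rw [← h2] at hlt'
        exact absurd (hlt.trans hlt') (lt_irrefl _)
  have hrankQ : Module.finrank K (A ⧸ p) ≤ n.choose 2 := by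
    calc Module.finrank K (A ⧸ p) = Module.finrank K (Submodule.span K (t : Set (A ⧸ p))) := by
          rw [hspan, finrank_top]
      _ ≤ t.card := finrank_span_finset_le_card t
      _ ≤ s.card := Finset.card_image_le
      _ ≤ n.choose 2 := hcard
  -- the map φ : A ⧸ p → L induced by π
  have hφcond : p ≤ LinearMap.ker (π.toLinearMap ∘ₗ A.subtype) := by
    intro x hx
    rw [LinearMap.mem_ker, LinearMap.comp_apply, Submodule.coe_subtype, LieHom.coe_toLinearMap]
    have : (x : F) ∈ R.toSubmodule := hBR (Submodule.mem_comap.mp hx)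
    rwa [LieSubmodule.mem_toSubmodule, hR, LieHom.mem_ker] at this
  let φ : (A ⧸ p) →ₗ[K] L := p.liftQ (π.toLinearMap ∘ₗ A.subtype) hφcond
  -- the map ι : schurMult → A ⧸ p
  have hιcond : pC ≤ LinearMap.ker (p.mkQ ∘ₗ Submodule.inclusion hCA) := by
    intro x hx
    rw [LinearMap.mem_ker, LinearMap.comp_apply, Submodule.mkQ_apply,
      Submodule.Quotient.mk_eq_zero]
    exact Submodule.mem_comap.mpr (Submodule.mem_comap.mp hx)
  let ι : (C ⧸ pC) →ₗ[K] (A ⧸ p) := pC.liftQ (p.mkQ ∘ₗ Submodule.inclusion hCA) hιcond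
  have hinj : Function.Injective ι := by
    rw [← LinearMap.ker_eq_bot]
    show LinearMap.ker (pC.liftQ (p.mkQ ∘ₗ Submodule.inclusion hCA) hιcond) = ⊥
    rw [Submodule.ker_liftQ]
    have hker' : LinearMap.ker (p.mkQ ∘ₗ Submodule.inclusion hCA) = pC := by
      ext x
      rw [LinearMap.mem_ker, LinearMap.comp_apply, Submodule.mkQ_apply,
        Submodule.Quotient.mk_eq_zero, hpC, Submodule.mem_comap, Submodule.mem_comap,
        Submodule.coe_subtype]
      rfl
    rw [hker', eq_bot_iff, Submodule.map_le_iff_le_comap]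
    intro x hx
    rw [Submodule.mem_comap, Submodule.mem_bot, Submodule.mkQ_apply,
      Submodule.Quotient.mk_eq_zero]
    exact hx
  have hkerrange : LinearMap.ker φ = LinearMap.range ι := by
    show LinearMap.ker (p.liftQ (π.toLinearMap ∘ₗ A.subtype) hφcond) =
      LinearMap.range (pC.liftQ (p.mkQ ∘ₗ Submodule.inclusion hCA) hιcond)
    rw [Submodule.ker_liftQ, Submodule.range_liftQ, LinearMap.range_comp,
      Submodule.range_inclusion]
    congr 1
    ext x
    rw [LinearMap.mem_ker, LinearMap.comp_apply, Submodule.coe_subtype, LieHom.coe_toLinearMap,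
      Submodule.mem_comap, Submodule.coe_subtype]
    constructor
    · intro hx
      rw [hC, LieSubmodule.inf_toSubmodule]
      refine Submodule.mem_inf.mpr ⟨?_, ?_⟩
      · rw [← hA]; exact x.2
      · rwa [LieSubmodule.mem_toSubmodule, hR, LieHom.mem_ker]
    · intro hx
      have := hCR hx
      rwa [LieSubmodule.mem_toSubmodule, hR, LieHom.mem_ker] at this
  have hrange : LinearMap.range φ = (lowerCentralSeries K L L 1).toSubmodule := by
    show LinearMap.range (p.liftQ (π.toLinearMap ∘ₗ A.subtype) hφcond) = _
    rw [Submodule.range_liftQ, LinearMap.range_comp, Submodule.range_subtype]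
    rw [hA, ← LieIdeal.coe_map_of_surjective hπ, LieIdeal.lowerCentralSeries_map_eq 1 hπ]
  -- rank-nullity
  have e1 : Module.finrank K (C ⧸ pC) = Module.finrank K (LinearMap.range ι) :=
    (LinearEquiv.ofInjective ι hinj).finrank_eq
  have e2 : Module.finrank K (LinearMap.range φ) + Module.finrank K (LinearMap.ker φ) =
      Module.finrank K (A ⧸ p) := φ.finrank_range_add_finrank_ker
  have ekey : Module.finrank K (C ⧸ pC) +
      Module.finrank K (lowerCentralSeries K L L 1).toSubmodule =
      Module.finrank K (A ⧸ p) := by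
    rw [e1, ← hkerrange, ← hrange, add_comm]
    exact e2
  have hMeq : Module.finrank K (schurMult K R) = Module.finrank K (C ⧸ pC) := rfl
  rw [hMeq]
  have hfin : (Module.finrank K (C ⧸ pC) : ℚ) = (Module.finrank K (A ⧸ p) : ℚ) -
      (Module.finrank K (lowerCentralSeries K L L 1).toSubmodule : ℚ) := by
    rw [← ekey]; push_cast; ring
  have hQb : (Module.finrank K (A ⧸ p) : ℚ) ≤ (n : ℚ) * ((n : ℚ) - 1) / 2 := by
    calc (Module.finrank K (A ⧸ p) : ℚ) ≤ (n.choose 2 : ℚ) := by exact_mod_cast hrankQ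
      _ = (n : ℚ) * ((n : ℚ) - 1) / 2 := Nat.cast_choose_two (K := ℚ) n
  linarith [hfin, hQb]

theorem stmt6 (K : Type) [Field K] (L : Type) [LieRing L] [LieAlgebra K L]
    [FiniteDimensional K L] (n : ℕ) (hn : Module.finrank K L = n)
    (X : Type) (π : FreeLieAlgebra K X →ₗ⁅K⁆ L) (hπ : Function.Surjective π) :
    (Module.finrank K (schurMult K π.ker) : ℚ) ≤
      (n : ℚ) * ((n : ℚ) - 1) / 2 -
        (Module.finrank K (lowerCentralSeries K L L 1).toSubmodule : ℚ) := by
  exact schurMult_aux K L n hn (FreeLieAlgebra K X) π hπ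
end

section
/- If L is a finite dimensional Lie algebra of dimension n, then dim M(L) ≤ n(n-1)/2. -/
open LieModule Finset

/-- pairs i<j in Fin n are counted by sigma -/
def ltPairsEquiv (n : ℕ) : {p : Fin n × Fin n // p.1 < p.2} ≃ Σ j : Fin n, Fin j.1 where
  toFun p := ⟨p.1.2, ⟨p.1.1, p.2⟩⟩
  invFun q := ⟨(⟨q.2.1, q.2.2.trans q.1.2⟩, q.1), q.2.2⟩
  left_inv p := by rcases p with ⟨⟨i, j⟩, h⟩; rfl
  right_inv q := by rcases q with ⟨j, i⟩; rfl

theorem card_ltPairs (n : ℕ) :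
    Fintype.card {p : Fin n × Fin n // p.1 < p.2} * 2 = n * (n - 1) := by
  rw [Fintype.card_congr (ltPairsEquiv n), Fintype.card_sigma]
  simp only [Fintype.card_fin]
  rw [Fin.sum_univ_eq_sum_range (fun i => i) n, Finset.sum_range_id_mul_two]

theorem stmt7 (K : Type) [Field K] (L : Type) [LieRing L] [LieAlgebra K L]
    [FiniteDimensional K L] (n : ℕ) (hn : Module.finrank K L = n)
    (X : Type) (π : FreeLieAlgebra K X →ₗ⁅K⁆ L) (hπ : Function.Surjective π) :
    (Module.finrank K (schurMult K π.ker) : ℚ) ≤ (n : ℚ) * ((n : ℚ) - 1) / 2 := by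
  subst hn
  set F := FreeLieAlgebra K X
  set R : LieIdeal K F := π.ker with hR
  -- a linear section of π
  obtain ⟨s, hs⟩ := π.toLinearMap.exists_rightInverse_of_surjective
    (LinearMap.range_eq_top.mpr hπ)
  have hsec : ∀ z : L, π (s z) = z := fun z => congrFun (congrArg DFunLike.coe hs) z
  set A' : Submodule K F := (lowerCentralSeries K F F 1 ⊓ R : LieIdeal K F).toSubmodule with hA
  set B' : Submodule K F := (⁅(⊤ : LieIdeal K F), R⁆ : LieIdeal K F).toSubmodule with hB
  -- the bilinear map
  set β : L →ₗ[K] L →ₗ[K] (F ⧸ B') :=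
    LinearMap.mk₂ K (fun x y => B'.mkQ ⁅s x, s y⁆)
      (fun x x' y => by simp [add_lie])
      (fun c x y => by simp [smul_lie])
      (fun x y y' => by simp [lie_add])
      (fun c x y => by simp [lie_smul]) with hβ
  have hβskew : ∀ x y, β x y = - β y x := by
    intro x y
    have : ⁅s x, s y⁆ = -⁅s y, s x⁆ := (lie_skew _ _).symm
    show B'.mkQ _ = -B'.mkQ _
    rw [this, map_neg]
  let b := Module.finBasis K L
  set W : Submodule K (F ⧸ B') :=
    Submodule.span K (Set.range
      fun p : {p : Fin (Module.finrank K L) × Fin (Module.finrank K L) // p.1 < p.2} =>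
      β (b p.1.1) (b p.1.2)) with hW
  have hWfd : FiniteDimensional K W := FiniteDimensional.span_of_finite K (Set.finite_range _)
  have hmem : ∀ i j : Fin (Module.finrank K L), β (b i) (b j) ∈ W := by
    intro i j
    rcases lt_trichotomy i j with h | h | h
    · exact Submodule.subset_span ⟨⟨(i, j), h⟩, rfl⟩
    · subst h
      have : β (b i) (b i) = 0 := by simp [hβ]
      rw [this]; exact W.zero_mem
    · rw [hβskew]
      exact W.neg_mem (Submodule.subset_span ⟨⟨(j, i), h⟩, rfl⟩)
  have hβW : ∀ x y : L, β x y ∈ W := by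
    intro x y
    rw [← b.sum_repr x, ← b.sum_repr y]
    simp only [map_sum, map_smul, LinearMap.sum_apply, LinearMap.smul_apply]
    refine W.sum_mem fun i _ => W.smul_mem _ (W.sum_mem fun j _ => W.smul_mem _ (hmem _ _))
  -- every bracket maps into W
  have hbrkt : ∀ u v : F, B'.mkQ ⁅u, v⁆ ∈ W := by
    intro u v
    have h1 : u - s (π u) ∈ R := by
      rw [hR, LieHom.mem_ker, map_sub, hsec, sub_self]
    have h2 : v - s (π v) ∈ R := by
      rw [hR, LieHom.mem_ker, map_sub, hsec, sub_self]
    have key : ⁅u, v⁆ - ⁅s (π u), s (π v)⁆ ∈ B' := by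
      have e : ⁅u, v⁆ - ⁅s (π u), s (π v)⁆
          = ⁅u - s (π u), v⁆ + ⁅s (π u), v - s (π v)⁆ := by
        simp only [lie_sub, sub_lie]
        abel
      rw [e]
      refine B'.add_mem ?_ ?_
      · rw [← lie_skew]
        exact B'.neg_mem (LieSubmodule.lie_mem_lie (LieSubmodule.mem_top v) h1)
      · exact LieSubmodule.lie_mem_lie (LieSubmodule.mem_top _) h2
    have : B'.mkQ ⁅u, v⁆ = β (π u) (π v) := by
      show B'.mkQ ⁅u, v⁆ = B'.mkQ ⁅s (π u), s (π v)⁆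
      rw [← sub_eq_zero, ← map_sub, Submodule.mkQ_apply, Submodule.Quotient.mk_eq_zero]
      exact key
    rw [this]; exact hβW _ _
  -- the ideal A' maps into W
  have hA'W : A'.map B'.mkQ ≤ W := by
    rw [Submodule.map_le_iff_le_comap]
    have hle : A' ≤ (lowerCentralSeries K F F 1 : LieIdeal K F).toSubmodule := by
      rw [hA]
      exact (inf_le_left : lowerCentralSeries K F F 1 ⊓ R ≤ _)
    refine hle.trans ?_
    have h1 : lowerCentralSeries K F F 1 = ⁅(⊤ : LieIdeal K F), (⊤ : LieSubmodule K F F)⁆ := by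
      rw [LieModule.lowerCentralSeries_succ, LieModule.lowerCentralSeries_zero]
    rw [h1, LieSubmodule.lieIdeal_oper_eq_linear_span, Submodule.span_le]
    rintro m ⟨x, v, rfl⟩
    exact hbrkt _ _
  -- build injective map from the Schur multiplier into F/B'
  set p : Submodule K A' := B'.comap A'.subtype with hp
  set f : A' →ₗ[K] F ⧸ B' := B'.mkQ.comp A'.subtype with hf
  have hker : LinearMap.ker f = p := by
    rw [hf, LinearMap.ker_comp, Submodule.ker_mkQ]
  have hpker : p ≤ LinearMap.ker f := hker.ge
  set φ : (A' ⧸ p) →ₗ[K] F ⧸ B' := p.liftQ f hpker with hφ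
  have hinj : Function.Injective φ := by
    rw [← LinearMap.ker_eq_bot, hφ]
    exact Submodule.ker_liftQ_eq_bot _ _ _ hker.le
  have hrange : LinearMap.range φ ≤ W := by
    rw [hφ, Submodule.range_liftQ, hf, LinearMap.range_comp, Submodule.range_subtype]
    exact hA'W
  -- conclude
  have heq : Module.finrank K (A' ⧸ p) = Module.finrank K (LinearMap.range φ) :=
    (LinearEquiv.ofInjective φ hinj).finrank_eq
  have hfr : Module.finrank K (A' ⧸ p)
      ≤ Fintype.card {p : Fin (Module.finrank K L) × Fin (Module.finrank K L) // p.1 < p.2} := by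
    rw [heq]
    refine le_trans (Submodule.finrank_mono hrange) ?_
    rw [hW]
    exact finrank_range_le_card _
  have hcard := card_ltPairs (Module.finrank K L)
  have hfinal : (Module.finrank K (A' ⧸ p) : ℚ)
      ≤ (Module.finrank K L : ℚ) * ((Module.finrank K L : ℚ) - 1) / 2 := by
    set n := Module.finrank K L with hn
    have h2 : (Module.finrank K (A' ⧸ p) : ℚ) * 2 ≤ ((n * (n - 1) : ℕ) : ℚ) := by
      rw [← hcard]
      exact_mod_cast Nat.mul_le_mul_right 2 hfr
    rcases n with _ | m
    · simpa using by linarith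
    · have : ((Nat.succ m * (Nat.succ m - 1) : ℕ) : ℚ)
          = ((m + 1 : ℕ) : ℚ) * ((m + 1 : ℚ) - 1) := by push_cast; ring
      rw [this] at h2
      push_cast at h2 ⊢
      linarith
  exact hfinal
end

section
/- Let L be a nilpotent Lie algebra of class c ≥ 2 with free presentation L ≅ F/R where F is a free Lie algebra. Then [F, F^c] = F^{c+1} ⊆ R, and there is an exact sequence 0 → F^{c+1}/([F,R] ∩ F^{c+1}) → M(L) → M(L/L^c) → L^c → 0. -/
open LieModule Finset

section QuotHelpers

variable {K V W : Type*} [Field K] [AddCommGroup V] [Module K V]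
  [AddCommGroup W] [Module K W]

/-- The natural map `A₁/B₁ → A₂/B₂` when `A₁ ≤ A₂` and `B₁ ≤ B₂`. -/
noncomputable def qmap (A₁ A₂ B₁ B₂ : Submodule K V) (hA : A₁ ≤ A₂) (hB : B₁ ≤ B₂) :
    (A₁ ⧸ B₁.comap A₁.subtype) →ₗ[K] (A₂ ⧸ B₂.comap A₂.subtype) :=
  Submodule.mapQ _ _ (Submodule.inclusion hA)
    (fun x hx => by
      simp only [Submodule.mem_comap, Submodule.subtype_apply, Submodule.coe_inclusion] at hx ⊢
      exact hB hx)

lemma qmap_mk (A₁ A₂ B₁ B₂ : Submodule K V) (hA : A₁ ≤ A₂) (hB : B₁ ≤ B₂) (x : A₁) :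
    qmap A₁ A₂ B₁ B₂ hA hB (Submodule.Quotient.mk x) =
      Submodule.Quotient.mk (Submodule.inclusion hA x) := by
  unfold qmap
  exact Submodule.mapQ_apply _ _ _ _

lemma qmap_injective (A₁ A₂ B₁ B₂ : Submodule K V) (hA : A₁ ≤ A₂) (hB : B₁ ≤ B₂)
    (hK : A₁ ⊓ B₂ ≤ B₁) : Function.Injective (qmap A₁ A₂ B₁ B₂ hA hB) := by
  rw [← LinearMap.ker_eq_bot, eq_bot_iff]
  intro y hy
  obtain ⟨x, rfl⟩ := Submodule.Quotient.mk_surjective _ y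
  simp only [LinearMap.mem_ker, qmap_mk, Submodule.Quotient.mk_eq_zero,
    Submodule.mem_comap, Submodule.subtype_apply, Submodule.coe_inclusion] at hy
  simp only [Submodule.mem_bot, Submodule.Quotient.mk_eq_zero, Submodule.mem_comap,
    Submodule.subtype_apply]
  exact hK ⟨x.2, hy⟩

lemma qmap_exact (A₁ A₂ A₃ B₁ B₂ B₃ : Submodule K V)
    (hA : A₁ ≤ A₂) (hB : B₁ ≤ B₂) (hA' : A₂ ≤ A₃) (hB' : B₂ ≤ B₃)
    (hcond : ∀ x : V, x ∈ A₂ → (x ∈ B₃ ↔ x ∈ A₁ ⊔ B₂)) :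
    Function.Exact (qmap A₁ A₂ B₁ B₂ hA hB) (qmap A₂ A₃ B₂ B₃ hA' hB') := by
  intro y
  obtain ⟨x, rfl⟩ := Submodule.Quotient.mk_surjective _ y
  rw [qmap_mk, Submodule.Quotient.mk_eq_zero]
  simp only [Submodule.mem_comap, Submodule.subtype_apply, Submodule.coe_inclusion]
  constructor
  · intro hx
    rw [hcond x x.2] at hx
    obtain ⟨a, ha, b, hb, hab⟩ := Submodule.mem_sup.mp hx
    refine ⟨Submodule.Quotient.mk ⟨a, ha⟩, ?_⟩
    rw [qmap_mk, Submodule.Quotient.eq]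
    simp only [Submodule.mem_comap, Submodule.subtype_apply, Submodule.coe_sub,
      Submodule.coe_inclusion]
    have : (a : V) - x = -b := by rw [← hab]; abel
    rw [this]
    exact B₂.neg_mem hb
  · rintro ⟨z, hz⟩
    obtain ⟨w, rfl⟩ := Submodule.Quotient.mk_surjective _ z
    rw [qmap_mk, Submodule.Quotient.eq] at hz
    simp only [Submodule.mem_comap, Submodule.subtype_apply, Submodule.coe_sub,
      Submodule.coe_inclusion] at hz
    rw [hcond x x.2]
    have : (x : V) = (w : V) + (-((w : V) - x)) := by abel
    rw [this]
    exact Submodule.add_mem_sup w.2 (B₂.neg_mem hz)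

/-- The map `A/B → T` induced by a linear map `φ` killing `B`, with `φ(A) ⊆ T`. -/
noncomputable def qlift (A B : Submodule K V) (T : Submodule K W) (φ : V →ₗ[K] W)
    (hT : ∀ x ∈ A, φ x ∈ T) (h0 : ∀ x ∈ B, φ x = 0) :
    (A ⧸ B.comap A.subtype) →ₗ[K] T :=
  Submodule.liftQ _ (LinearMap.codRestrict T (φ.comp A.subtype) (fun x => hT x x.2))
    (by
      intro x hx
      simp only [Submodule.mem_comap, Submodule.subtype_apply] at hx
      simp only [LinearMap.mem_ker, LinearMap.codRestrict_apply, LinearMap.coe_comp,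
        Function.comp_apply, Submodule.subtype_apply]
      exact Subtype.ext (h0 _ hx))

lemma qlift_mk (A B : Submodule K V) (T : Submodule K W) (φ : V →ₗ[K] W)
    (hT : ∀ x ∈ A, φ x ∈ T) (h0 : ∀ x ∈ B, φ x = 0) (x : A) :
    ((qlift A B T φ hT h0 (Submodule.Quotient.mk x) : T) : W) = φ x := rfl

lemma qmap_qlift_exact (A₂ A₃ B₂ B₃ : Submodule K V) (hA : A₂ ≤ A₃) (hB : B₂ ≤ B₃)
    (T : Submodule K W) (φ : V →ₗ[K] W)
    (hT : ∀ x ∈ A₃, φ x ∈ T) (h0 : ∀ x ∈ B₃, φ x = 0)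
    (hcond : ∀ x : V, x ∈ A₃ → (φ x = 0 ↔ x ∈ A₂ ⊔ B₃)) :
    Function.Exact (qmap A₂ A₃ B₂ B₃ hA hB) (qlift A₃ B₃ T φ hT h0) := by
  intro y
  obtain ⟨x, rfl⟩ := Submodule.Quotient.mk_surjective _ y
  have hval : qlift A₃ B₃ T φ hT h0 (Submodule.Quotient.mk x) = 0 ↔ φ x = 0 := by
    rw [Subtype.ext_iff, qlift_mk]; simp
  rw [hval, hcond x x.2]
  constructor
  · intro hx
    obtain ⟨a, ha, b, hb, hab⟩ := Submodule.mem_sup.mp hx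
    refine ⟨Submodule.Quotient.mk ⟨a, ha⟩, ?_⟩
    rw [qmap_mk, Submodule.Quotient.eq]
    simp only [Submodule.mem_comap, Submodule.subtype_apply, Submodule.coe_sub,
      Submodule.coe_inclusion]
    have : (a : V) - x = -b := by rw [← hab]; abel
    rw [this]
    exact B₃.neg_mem hb
  · rintro ⟨z, hz⟩
    obtain ⟨w, rfl⟩ := Submodule.Quotient.mk_surjective _ z
    rw [qmap_mk, Submodule.Quotient.eq] at hz
    simp only [Submodule.mem_comap, Submodule.subtype_apply, Submodule.coe_sub,
      Submodule.coe_inclusion] at hz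
    have : (x : V) = (w : V) + (-((w : V) - x)) := by abel
    rw [this]
    exact Submodule.add_mem_sup w.2 (B₃.neg_mem hz)

lemma qlift_surjective (A B : Submodule K V) (T : Submodule K W) (φ : V →ₗ[K] W)
    (hT : ∀ x ∈ A, φ x ∈ T) (h0 : ∀ x ∈ B, φ x = 0)
    (hcond : ∀ t ∈ T, ∃ x ∈ A, φ x = t) :
    Function.Surjective (qlift A B T φ hT h0) := by
  rintro ⟨t, ht⟩
  obtain ⟨x, hx, hxt⟩ := hcond t ht
  exact ⟨Submodule.Quotient.mk ⟨x, hx⟩, Subtype.ext (by rw [qlift_mk]; exact hxt)⟩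

end QuotHelpers

theorem stmt8 (K : Type) [Field K] (L : Type) [LieRing L] [LieAlgebra K L]
    [FiniteDimensional K L] (c : ℕ) (hc : 2 ≤ c)
    (hclass : lowerCentralSeries K L L c = ⊥)
    (hclass' : lowerCentralSeries K L L (c - 1) ≠ ⊥)
    (X : Type) (π : FreeLieAlgebra K X →ₗ⁅K⁆ L) (hπ : Function.Surjective π) :
    lowerCentralSeries K (FreeLieAlgebra K X) (FreeLieAlgebra K X) c =
      ⁅(⊤ : LieIdeal K (FreeLieAlgebra K X)),
        lowerCentralSeries K (FreeLieAlgebra K X) (FreeLieAlgebra K X) (c - 1)⁆ ∧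
    lowerCentralSeries K (FreeLieAlgebra K X) (FreeLieAlgebra K X) c ≤ π.ker ∧
    ∃ (f : lieIdealQuot K (lowerCentralSeries K (FreeLieAlgebra K X) (FreeLieAlgebra K X) c)
            (⁅(⊤ : LieIdeal K (FreeLieAlgebra K X)), π.ker⁆ ⊓
              lowerCentralSeries K (FreeLieAlgebra K X) (FreeLieAlgebra K X) c) →ₗ[K]
          schurMult K π.ker)
      (g : schurMult K π.ker →ₗ[K]
        lieIdealQuot K
          (lowerCentralSeries K (FreeLieAlgebra K X) (FreeLieAlgebra K X) 1 ⊓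
            (lowerCentralSeries K (FreeLieAlgebra K X) (FreeLieAlgebra K X) (c - 1) ⊔ π.ker))
          ⁅(⊤ : LieIdeal K (FreeLieAlgebra K X)),
            lowerCentralSeries K (FreeLieAlgebra K X) (FreeLieAlgebra K X) (c - 1) ⊔ π.ker⁆)
      (h : lieIdealQuot K
          (lowerCentralSeries K (FreeLieAlgebra K X) (FreeLieAlgebra K X) 1 ⊓
            (lowerCentralSeries K (FreeLieAlgebra K X) (FreeLieAlgebra K X) (c - 1) ⊔ π.ker))
          ⁅(⊤ : LieIdeal K (FreeLieAlgebra K X)),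
            lowerCentralSeries K (FreeLieAlgebra K X) (FreeLieAlgebra K X) (c - 1) ⊔ π.ker⁆
          →ₗ[K] (lowerCentralSeries K L L (c - 1)).toSubmodule),
      Function.Injective f ∧ Function.Exact f g ∧ Function.Exact g h ∧
        Function.Surjective h := by
  obtain ⟨d, rfl⟩ : ∃ d, c = d + 1 := ⟨c - 1, by omega⟩
  have hd : 1 ≤ d := by omega
  simp only [Nat.add_sub_cancel] at hclass' ⊢
  -- the successor formula for the lower central series
  have hsucc : lowerCentralSeries K (FreeLieAlgebra K X) (FreeLieAlgebra K X) (d + 1) =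
      ⁅(⊤ : LieIdeal K (FreeLieAlgebra K X)),
        lowerCentralSeries K (FreeLieAlgebra K X) (FreeLieAlgebra K X) d⁆ :=
    LieModule.lowerCentralSeries_succ K (FreeLieAlgebra K X) (FreeLieAlgebra K X) d
  -- `F^{c+1} ≤ R`
  have hker : lowerCentralSeries K (FreeLieAlgebra K X) (FreeLieAlgebra K X) (d + 1) ≤ π.ker := by
    intro x hx
    have h1 : π x ∈ LieIdeal.map π
        (lowerCentralSeries K (FreeLieAlgebra K X) (FreeLieAlgebra K X) (d + 1)) :=
      LieIdeal.mem_map hx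
    rw [LieIdeal.lowerCentralSeries_map_eq (d + 1) hπ, hclass] at h1
    exact LieHom.mem_ker.mpr ((LieSubmodule.mem_bot _).mp h1)
  refine ⟨hsucc, hker, ?_⟩
  -- key bracket computation: `[F, F^d ⊔ R] = F^{d+1} ⊔ [F, R]`
  have hkey : (⁅(⊤ : LieIdeal K (FreeLieAlgebra K X)),
        lowerCentralSeries K (FreeLieAlgebra K X) (FreeLieAlgebra K X) d ⊔ π.ker⁆ :
          LieIdeal K (FreeLieAlgebra K X)) =
      lowerCentralSeries K (FreeLieAlgebra K X) (FreeLieAlgebra K X) (d + 1) ⊔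
        ⁅(⊤ : LieIdeal K (FreeLieAlgebra K X)), π.ker⁆ := by
    rw [LieSubmodule.lie_sup, ← hsucc]
  have hFc_le_F2 : lowerCentralSeries K (FreeLieAlgebra K X) (FreeLieAlgebra K X) (d + 1) ≤
      lowerCentralSeries K (FreeLieAlgebra K X) (FreeLieAlgebra K X) 1 :=
    antitone_lowerCentralSeries K _ _ (by omega)
  have hFd_le_F2 : lowerCentralSeries K (FreeLieAlgebra K X) (FreeLieAlgebra K X) d ≤
      lowerCentralSeries K (FreeLieAlgebra K X) (FreeLieAlgebra K X) 1 :=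
    antitone_lowerCentralSeries K _ _ hd
  have hTR_le_F2 : (⁅(⊤ : LieIdeal K (FreeLieAlgebra K X)), π.ker⁆ :
        LieIdeal K (FreeLieAlgebra K X)) ≤
      lowerCentralSeries K (FreeLieAlgebra K X) (FreeLieAlgebra K X) 1 := by
    have h1 : (⁅(⊤ : LieIdeal K (FreeLieAlgebra K X)), π.ker⁆ :
          LieIdeal K (FreeLieAlgebra K X)) ≤
        ⁅(⊤ : LieIdeal K (FreeLieAlgebra K X)), (⊤ : LieIdeal K (FreeLieAlgebra K X))⁆ :=
      LieSubmodule.mono_lie le_rfl le_top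
    refine h1.trans ?_
    rw [show (1 : ℕ) = 0 + 1 from rfl, LieModule.lowerCentralSeries_succ]
    exact LieSubmodule.mono_lie le_rfl (by simp)
  have hTR_le_R : (⁅(⊤ : LieIdeal K (FreeLieAlgebra K X)), π.ker⁆ :
        LieIdeal K (FreeLieAlgebra K X)) ≤ π.ker :=
    LieSubmodule.lie_le_right π.ker ⊤
  have hTS_le : (⁅(⊤ : LieIdeal K (FreeLieAlgebra K X)),
        lowerCentralSeries K (FreeLieAlgebra K X) (FreeLieAlgebra K X) d ⊔ π.ker⁆ :
          LieIdeal K (FreeLieAlgebra K X)) ≤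
      lowerCentralSeries K (FreeLieAlgebra K X) (FreeLieAlgebra K X) 1 ⊓ π.ker := by
    rw [hkey]
    exact sup_le (le_inf hFc_le_F2 hker) (le_inf hTR_le_F2 hTR_le_R)
  have hmapd : LieIdeal.map π
        (lowerCentralSeries K (FreeLieAlgebra K X) (FreeLieAlgebra K X) d) =
      lowerCentralSeries K L L d :=
    LieIdeal.lowerCentralSeries_map_eq d hπ
  -- the three maps
  refine ⟨qmap _ _ _ _ ?_ ?_, qmap _ _ _ _ ?_ ?_,
      qlift _ _ _ π.toLinearMap ?_ ?_, ?_, ?_, ?_, ?_⟩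
  · exact (LieSubmodule.toSubmodule_le_toSubmodule _ _).mpr (le_inf hFc_le_F2 hker)
  · exact (LieSubmodule.toSubmodule_le_toSubmodule _ _).mpr inf_le_left
  · exact (LieSubmodule.toSubmodule_le_toSubmodule _ _).mpr (inf_le_inf le_rfl le_sup_right)
  · exact (LieSubmodule.toSubmodule_le_toSubmodule _ _).mpr
      (LieSubmodule.mono_lie le_rfl le_sup_right)
  · -- π maps `F² ⊓ (F^d ⊔ R)` into `lcs L d`
    intro x hx
    simp only [Nat.add_sub_cancel] at hx ⊢
    rw [LieSubmodule.mem_toSubmodule, LieSubmodule.mem_inf] at hx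
    have hxS := hx.2
    rw [LieSubmodule.mem_sup] at hxS
    obtain ⟨a, ha, r, hr, rfl⟩ := hxS
    have h1 : π a ∈ lowerCentralSeries K L L d := by
      rw [← hmapd]; exact LieIdeal.mem_map ha
    have h2 : π r = 0 := LieHom.mem_ker.mp hr
    rw [LieSubmodule.mem_toSubmodule]
    simpa [h2] using h1
  · -- `[F, F^d ⊔ R]` is killed by π
    intro x hx
    simp only [Nat.add_sub_cancel] at hx
    rw [LieSubmodule.mem_toSubmodule] at hx
    have hxm := hTS_le hx
    rw [LieSubmodule.mem_inf] at hxm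
    simpa using LieHom.mem_ker.mp hxm.2
  · -- f injective
    apply qmap_injective
    rw [← LieSubmodule.inf_toSubmodule]
    exact (LieSubmodule.toSubmodule_le_toSubmodule _ _).mpr (le_inf inf_le_right inf_le_left)
  · -- Exact f g
    apply qmap_exact
    intro x hx
    simp only [Nat.add_sub_cancel] at hx ⊢
    rw [← LieSubmodule.sup_toSubmodule, hkey]
  · -- Exact g h
    apply qmap_qlift_exact
    intro x hx
    simp only [Nat.add_sub_cancel] at hx ⊢
    rw [LieSubmodule.mem_toSubmodule, LieSubmodule.mem_inf] at hx
    rw [← LieSubmodule.sup_toSubmodule, sup_eq_left.mpr hTS_le,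
      LieSubmodule.mem_toSubmodule, LieSubmodule.mem_inf]
    simp only [LieHom.coe_toLinearMap]
    constructor
    · intro hx0
      exact ⟨hx.1, LieHom.mem_ker.mpr hx0⟩
    · intro hx2
      exact LieHom.mem_ker.mp hx2.2
  · -- h surjective
    apply qlift_surjective
    intro t ht
    simp only [Nat.add_sub_cancel] at ht ⊢
    rw [LieSubmodule.mem_toSubmodule, ← hmapd] at ht
    obtain ⟨x, hxt⟩ := LieIdeal.mem_map_of_surjective hπ ht
    refine ⟨(x : FreeLieAlgebra K X), ?_, by simpa using hxt⟩
    rw [LieSubmodule.mem_toSubmodule, LieSubmodule.mem_inf]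
    have hle : lowerCentralSeries K (FreeLieAlgebra K X) (FreeLieAlgebra K X) d ≤
        lowerCentralSeries K (FreeLieAlgebra K X) (FreeLieAlgebra K X) d ⊔ π.ker := le_sup_left
    exact ⟨hFd_le_F2 x.2, hle x.2⟩
end

section
/- Let F be a free Lie algebra over a field and R a nonzero ideal of F contained in F^2 with F/R nilpotent. Then [F,R] is a proper subideal of R. -/
open LieModule Finset

/-! ### Auxiliary machinery -/

attribute [local instance] LieRing.ofAssociativeRing

section Aux

/-- Brackets of spans land where brackets of generators do. -/
lemma span_lie_span_mem {K L : Type*} [CommRing K] [LieRing L] [LieAlgebra K L]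
    (s t : Set L) (p : Submodule K L)
    (h : ∀ a ∈ s, ∀ b ∈ t, ⁅a, b⁆ ∈ p) :
    ∀ u ∈ Submodule.span K s, ∀ v ∈ Submodule.span K t, ⁅u, v⁆ ∈ p := by
  intro u hu
  induction hu using Submodule.span_induction with
  | mem a ha =>
    intro v hv
    induction hv using Submodule.span_induction with
    | mem b hb => exact h a ha b hb
    | zero => rw [lie_zero]; exact p.zero_mem
    | add b c _ _ hb hc => rw [lie_add]; exact p.add_mem hb hc
    | smul r b _ hb => rw [lie_smul]; exact p.smul_mem r hb
  | zero => intro v hv; rw [zero_lie]; exact p.zero_mem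
  | add a b _ _ ha hb => intro v hv; rw [add_lie]; exact p.add_mem (ha v hv) (hb v hv)
  | smul r a _ ha => intro v hv; rw [smul_lie]; exact p.smul_mem r (ha v hv)

variable (K : Type*) [Field K] (d : ℕ)

/-- `e j = E_{0,j}`. -/
noncomputable def eMat (j : Fin (d + 2)) : Matrix (Fin (d + 2)) (Fin (d + 2)) K :=
  Matrix.single 0 j 1

/-- The sum of all superdiagonal matrix units. -/
noncomputable def xMat : Matrix (Fin (d + 2)) (Fin (d + 2)) K :=
  ∑ i : Fin (d + 1), Matrix.single i.castSucc i.succ 1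

lemma e_mul_x (c : K) (j : Fin (d + 2)) :
    Matrix.single (0 : Fin (d + 2)) j c * xMat K d =
      if h : (j : ℕ) + 1 < d + 2 then Matrix.single (0 : Fin (d + 2)) ⟨(j : ℕ) + 1, h⟩ c else 0 := by
  rw [xMat, Finset.mul_sum]
  split_ifs with h
  · have hj' : (j : ℕ) < d + 1 := by omega
    set i0 : Fin (d + 1) := ⟨(j : ℕ), hj'⟩ with hi0
    rw [Finset.sum_eq_single i0]
    · have h1 : i0.castSucc = j := by ext; simp [hi0]
      have h2 : i0.succ = (⟨(j : ℕ) + 1, h⟩ : Fin (d + 2)) := by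
        ext; simp [hi0, Fin.val_succ]
      rw [h1, h2, Matrix.single_mul_single_same, mul_one]
    · intro i _ hi
      rw [Matrix.single_mul_single_of_ne]
      intro hji
      apply hi
      have hval := congrArg Fin.val hji
      simp only [Fin.coe_castSucc] at hval
      ext
      simp [hi0, ← hval]
    · intro hmem; exact absurd (Finset.mem_univ _) hmem
  · apply Finset.sum_eq_zero
    intro i _
    rw [Matrix.single_mul_single_of_ne]
    intro hji
    have : (j : ℕ) = (i.castSucc : ℕ) := by rw [hji]
    have hi := i.isLt
    simp only [Fin.coe_castSucc] at this
    omega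

lemma x_mul_e (c : K) (j : Fin (d + 2)) : xMat K d * Matrix.single (0 : Fin (d + 2)) j c = 0 := by
  rw [xMat, Finset.sum_mul]
  apply Finset.sum_eq_zero
  intro i _
  rw [Matrix.single_mul_single_of_ne]
  exact Fin.succ_ne_zero i

lemma lie_e_x (c : K) (j : Fin (d + 2)) :
    ⁅Matrix.single (0 : Fin (d + 2)) j c, xMat K d⁆ =
      if h : (j : ℕ) + 1 < d + 2 then Matrix.single (0 : Fin (d + 2)) ⟨(j : ℕ) + 1, h⟩ c else 0 := by
  rw [Ring.lie_def, x_mul_e, e_mul_x, sub_zero]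

lemma lie_x_e (c : K) (j : Fin (d + 2)) :
    ⁅xMat K d, Matrix.single (0 : Fin (d + 2)) j c⁆ =
      -(if h : (j : ℕ) + 1 < d + 2 then Matrix.single (0 : Fin (d + 2)) ⟨(j : ℕ) + 1, h⟩ c else 0) := by
  rw [← lie_e_x, ← lie_skew]

lemma neg_stdBasis (i j : Fin (d + 2)) (c : K) :
    -(Matrix.single i j c) = Matrix.single i j (-c) := by
  rw [← neg_one_smul K c, ← Matrix.smul_single, neg_one_smul]

lemma lie_x_e' (jv : ℕ) (h1 : jv < d + 2) (h2 : jv + 1 < d + 2) (c : K) :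
    ⁅xMat K d, Matrix.single (0 : Fin (d + 2)) (⟨jv, h1⟩ : Fin (d + 2)) c⁆ =
      -(Matrix.single (0 : Fin (d + 2)) (⟨jv + 1, h2⟩ : Fin (d + 2)) c) := by
  rw [lie_x_e, dif_pos (show ((⟨jv, h1⟩ : Fin (d + 2)) : ℕ) + 1 < d + 2 from h2)]

lemma lie_e_e (i j : Fin (d + 2)) (hi : i ≠ 0) (hj : j ≠ 0) :
    ⁅eMat K d i, eMat K d j⁆ = 0 := by
  rw [Ring.lie_def, eMat, eMat, Matrix.single_mul_single_of_ne _ _ _ _ hi,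
    Matrix.single_mul_single_of_ne _ _ _ _ hj, sub_zero]

/-- Generating sets for the filtration. -/
def genSet : ℕ → Set (Matrix (Fin (d + 2)) (Fin (d + 2)) K)
  | 0 => {xMat K d} ∪ {m | ∃ j : Fin (d + 2), 1 ≤ (j : ℕ) ∧ eMat K d j = m}
  | k + 1 => {m | ∃ j : Fin (d + 2), k + 2 ≤ (j : ℕ) ∧ eMat K d j = m}

/-- The filtration submodules. -/
noncomputable def Tmod (k : ℕ) : Submodule K (Matrix (Fin (d + 2)) (Fin (d + 2)) K) :=
  Submodule.span K (genSet K d k)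

lemma gen_lie_gen (k : ℕ) :
    ∀ a ∈ genSet K d 0, ∀ b ∈ genSet K d k, ⁅a, b⁆ ∈ Tmod K d (k + 1) := by
  have key : ∀ a ∈ genSet K d 0, ∀ (j : Fin (d + 2)), k + 1 ≤ (j : ℕ) →
      ⁅a, eMat K d j⁆ ∈ Tmod K d (k + 1) := by
    rintro a (rfl | ⟨i, hi1, rfl⟩) j hj
    · rw [eMat, lie_x_e]
      apply neg_mem
      split_ifs with h
      · exact Submodule.subset_span ⟨⟨(j : ℕ) + 1, h⟩,
          show k + 1 + 1 ≤ (j : ℕ) + 1 by omega, rfl⟩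
      · exact zero_mem _
    · rw [lie_e_e K d i j (by intro hz; rw [hz] at hi1; simp at hi1)
        (by intro hz; rw [hz] at hj; simp at hj)]
      exact zero_mem _
  intro a ha b hb
  match k with
  | 0 =>
    rcases hb with rfl | ⟨j, hj1, rfl⟩
    · rcases ha with rfl | ⟨i, hi1, rfl⟩
      · rw [lie_self]; exact zero_mem _
      · rw [eMat, lie_e_x]
        split_ifs with h
        · exact Submodule.subset_span ⟨⟨(i : ℕ) + 1, h⟩,
            show 0 + 2 ≤ (i : ℕ) + 1 by omega, rfl⟩
        · exact zero_mem _
    · exact key a ha j hj1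
  | k + 1 =>
    obtain ⟨j, hj, rfl⟩ := hb
    exact key a ha j (by omega)

lemma T_lie_T (k : ℕ) :
    ∀ u ∈ Tmod K d 0, ∀ v ∈ Tmod K d k, ⁅u, v⁆ ∈ Tmod K d (k + 1) :=
  span_lie_span_mem _ _ _ (gen_lie_gen K d k)

lemma T1_le_T0 : Tmod K d 1 ≤ Tmod K d 0 := by
  apply Submodule.span_mono
  rintro m ⟨j, hj, rfl⟩
  exact Or.inr ⟨j, by omega, rfl⟩

/-- `Tmod 0` as a Lie subalgebra. -/
noncomputable def T0alg : LieSubalgebra K (Matrix (Fin (d + 2)) (Fin (d + 2)) K) :=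
  { Tmod K d 0 with
    lie_mem' := fun {a b} ha hb => T1_le_T0 K d (T_lie_T K d 0 a ha b hb) }

/-- Iterated bracket elements. -/
def vElt {L : Type*} [LieRing L] (g0 g1 : L) : ℕ → L
  | 0 => g0
  | k + 1 => ⁅g1, vElt g0 g1 k⁆

end Aux

theorem stmt17 (K : Type) [Field K] (n : ℕ)
    (R : LieIdeal K (FreeLieAlgebra K (Fin n))) (hR : R ≠ ⊥)
    (hR2 : R ≤ lowerCentralSeries K (FreeLieAlgebra K (Fin n)) (FreeLieAlgebra K (Fin n)) 1)
    (hnilp : ∃ c : ℕ,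
      lowerCentralSeries K (FreeLieAlgebra K (Fin n)) (FreeLieAlgebra K (Fin n)) c ≤ R) :
    ⁅(⊤ : LieIdeal K (FreeLieAlgebra K (Fin n))), R⁆ < R := by
  set F := FreeLieAlgebra K (Fin n) with hF
  refine lt_of_le_of_ne (LieSubmodule.lie_le_right R ⊤) ?_
  intro heq
  by_cases hn : n < 2
  · -- `F` is abelian, so `R ≤ F¹ = ⊥`, contradiction.
    -- the span of the generators is all of `F`
    set C : Submodule K F := Submodule.span K (Set.range (FreeLieAlgebra.of K)) with hC
    have habel : ∀ a ∈ C, ∀ b ∈ C, ⁅a, b⁆ = (0 : F) := by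
      have h0 : ∀ a ∈ Set.range (FreeLieAlgebra.of K (X := Fin n)),
          ∀ b ∈ Set.range (FreeLieAlgebra.of K (X := Fin n)), ⁅a, b⁆ ∈ (⊥ : Submodule K F) := by
        rintro a ⟨i, rfl⟩ b ⟨j, rfl⟩
        have : i = j := by ext; omega
        subst this
        simp [lie_self]
      intro a ha b hb
      simpa using span_lie_span_mem _ _ (⊥ : Submodule K F) h0 a ha b hb
    have hCsub : ∀ {a b : F}, a ∈ C → b ∈ C → ⁅a, b⁆ ∈ C := by
      intro a b ha hb
      rw [habel a ha b hb]; exact C.zero_mem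
    set C' : LieSubalgebra K F := { C with lie_mem' := hCsub } with hC'
    have hall : ∀ z : F, z ∈ C := by
      have hcomp : C'.incl.comp
          ((FreeLieAlgebra.lift K) fun i => (⟨FreeLieAlgebra.of K i,
            Submodule.subset_span ⟨i, rfl⟩⟩ : C')) = LieHom.id := by
        apply FreeLieAlgebra.hom_ext
        intro i
        simp only [LieHom.comp_apply, FreeLieAlgebra.lift_of_apply, LieHom.id_apply]
        rfl
      intro z
      have := congrArg (fun g => g z) hcomp
      simp only [LieHom.comp_apply, LieHom.id_apply] at this
      rw [← this]
      exact (((FreeLieAlgebra.lift K) fun i => (⟨FreeLieAlgebra.of K i,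
        Submodule.subset_span ⟨i, rfl⟩⟩ : C')) z).2
    have h1bot : lowerCentralSeries K F F 1 = ⊥ := by
      rw [eq_bot_iff]
      intro z hz
      rw [LieModule.lowerCentralSeries_succ] at hz
      have hspan := LieSubmodule.lieIdeal_oper_eq_linear_span'
        (lowerCentralSeries K F F 0) (⊤ : LieIdeal K F)
      have hz' : z ∈ Submodule.span K
          {m : F | ∃ x ∈ (⊤ : LieIdeal K F), ∃ nn ∈ lowerCentralSeries K F F 0, ⁅x, nn⁆ = m} := by
        rw [← hspan]; exact hz
      have hle : Submodule.span K
          {m : F | ∃ x ∈ (⊤ : LieIdeal K F), ∃ nn ∈ lowerCentralSeries K F F 0, ⁅x, nn⁆ = m}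
          ≤ (⊥ : Submodule K F) := by
        rw [Submodule.span_le]
        rintro m ⟨x, -, nn, -, rfl⟩
        simp [habel x (hall x) nn (hall nn)]
      have : z ∈ (⊥ : Submodule K F) := hle hz'
      simpa using this
    rw [h1bot, le_bot_iff] at hR2
    exact hR hR2
  · -- main case: `n ≥ 2`.
    push_neg at hn
    -- `R` is below every term of the lower central series
    have hRk : ∀ k, R ≤ lowerCentralSeries K F F (k + 1) := by
      intro k
      induction k with
      | zero => exact hR2
      | succ k ih =>
        calc R = ⁅(⊤ : LieIdeal K F), R⁆ := heq.symm
        _ ≤ ⁅(⊤ : LieIdeal K F), lowerCentralSeries K F F (k + 1)⁆ :=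
            LieSubmodule.mono_lie_right _ ih
        _ = lowerCentralSeries K F F (k + 2) := (LieModule.lowerCentralSeries_succ K F F (k + 1)).symm
    obtain ⟨c, hc⟩ := hnilp
    set d := max c 1 with hd
    have hdc : lowerCentralSeries K F F d ≤ R :=
      le_trans (antitone_lowerCentralSeries K F F (le_max_left c 1)) hc
    have hfix : lowerCentralSeries K F F d ≤ lowerCentralSeries K F F (d + 1) :=
      le_trans hdc (hRk d)
    -- the morphism to matrices
    set M := Matrix (Fin (d + 2)) (Fin (d + 2)) K with hM
    set f : Fin n → M := fun i =>
      if (i : ℕ) = 0 then eMat K d 1 else if (i : ℕ) = 1 then xMat K d else 0 with hf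
    have hfmem : ∀ i, f i ∈ T0alg K d := by
      intro i
      rw [hf]
      dsimp only
      split_ifs
      · exact Submodule.subset_span (Or.inr ⟨1, by simp, rfl⟩)
      · exact Submodule.subset_span (Or.inl rfl)
      · exact zero_mem _
    set φ : F →ₗ⁅K⁆ M := (FreeLieAlgebra.lift K) f with hφ
    have hrange : ∀ z : F, φ z ∈ Tmod K d 0 := by
      have hcomp : (T0alg K d).incl.comp
          ((FreeLieAlgebra.lift K) fun i => (⟨f i, hfmem i⟩ : T0alg K d)) = φ := by
        apply FreeLieAlgebra.hom_ext
        intro i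
        simp only [LieHom.comp_apply, FreeLieAlgebra.lift_of_apply, hφ]
        rfl
      intro z
      have := congrArg (fun g => g z) hcomp
      simp only [LieHom.comp_apply] at this
      rw [← this]
      exact (((FreeLieAlgebra.lift K) fun i => (⟨f i, hfmem i⟩ : T0alg K d)) z).2
    have hmap : ∀ k, ∀ z ∈ lowerCentralSeries K F F k, φ z ∈ Tmod K d k := by
      intro k
      induction k with
      | zero => exact fun z _ => hrange z
      | succ k ih =>
        intro z hz
        rw [LieModule.lowerCentralSeries_succ] at hz
        have hspan := LieSubmodule.lieIdeal_oper_eq_linear_span'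
          (lowerCentralSeries K F F k) (⊤ : LieIdeal K F)
        have hz' : z ∈ Submodule.span K
            {m : F | ∃ x ∈ (⊤ : LieIdeal K F),
              ∃ nn ∈ lowerCentralSeries K F F k, ⁅x, nn⁆ = m} := by
          rw [← hspan]; exact hz
        have hle : Submodule.span K
            {m : F | ∃ x ∈ (⊤ : LieIdeal K F),
              ∃ nn ∈ lowerCentralSeries K F F k, ⁅x, nn⁆ = m}
            ≤ (Tmod K d (k + 1)).comap φ.toLinearMap := by
          rw [Submodule.span_le]
          rintro m ⟨x, -, nn, hnn, rfl⟩
          simp only [Set.mem_setOf_eq, SetLike.mem_coe, Submodule.mem_comap,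
            LieHom.coe_toLinearMap, LieHom.map_lie]
          exact T_lie_T K d k (φ x) (hrange x) (φ nn) (ih nn hnn)
        exact hle hz'
    -- the iterated bracket element
    set g0 : F := FreeLieAlgebra.of K (⟨0, by omega⟩ : Fin n) with hg0
    set g1 : F := FreeLieAlgebra.of K (⟨1, by omega⟩ : Fin n) with hg1
    have hvmem : ∀ k, vElt g0 g1 k ∈ lowerCentralSeries K F F k := by
      intro k
      induction k with
      | zero => simp [vElt]
      | succ k ih =>
        rw [LieModule.lowerCentralSeries_succ]
        exact LieSubmodule.lie_mem_lie (LieSubmodule.mem_top _) ih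
    have hφg0 : φ g0 = eMat K d 1 := by
      rw [hg0, hφ, FreeLieAlgebra.lift_of_apply]
      simp [hf]
    have hφg1 : φ g1 = xMat K d := by
      rw [hg1, hφ, FreeLieAlgebra.lift_of_apply]
      simp [hf]
    have hφv : ∀ k (h : k + 1 < d + 2),
        φ (vElt g0 g1 k) = Matrix.single 0 ⟨k + 1, h⟩ ((-1 : K) ^ k) := by
      intro k
      induction k with
      | zero =>
        intro h
        rw [vElt, hφg0, eMat, pow_zero,
          show (1 : Fin (d + 2)) = ⟨1, h⟩ from by ext; simp]
      | succ k ih =>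
        intro h
        have hk : k + 1 < d + 2 := by omega
        rw [vElt, LieHom.map_lie, hφg1, ih hk, lie_x_e' K d (k + 1) hk h, neg_stdBasis,
          show -((-1 : K) ^ k) = (-1 : K) ^ (k + 1) by ring]
    -- derive the contradiction
    have hvd : φ (vElt g0 g1 d) ∈ Tmod K d (d + 1) :=
      hmap (d + 1) _ (hfix (hvmem d))
    have hTbot : Tmod K d (d + 1) = ⊥ := by
      rw [Tmod]
      convert Submodule.span_empty
      rw [genSet]
      ext m
      simp only [Set.mem_setOf_eq, Set.mem_empty_iff_false, iff_false]
      rintro ⟨j, hj, -⟩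
      have := j.isLt
      omega
    rw [hTbot, Submodule.mem_bot] at hvd
    have hd2 : d + 1 < d + 2 := by omega
    rw [hφv d hd2] at hvd
    have hentry : ((-1 : K) ^ d) = 0 := by
      have h2 := congrArg
        (fun A : Matrix (Fin (d + 2)) (Fin (d + 2)) K => A 0 ⟨d + 1, hd2⟩) hvd
      simp only [Matrix.single_apply_same] at h2
      exact h2.trans rfl
    exact pow_ne_zero d (neg_ne_zero.mpr one_ne_zero) hentry
end
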